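/- arXiv:1902.03108 — 8 statements merged into one kernel-verified Lean document; each statement's English description precedes it below -/
import Mathlib

section
/- Let p be a partial b-metric on X with coefficient s ≥ 1, T: X → X satisfy p(Tⁿx, Tⁿy) ≤ K p(x,y) for some n > 1 and 0 < K < 1, and let λ > 1 satisfy K^{1/n} < 1/λ < 1. Define p'(x,y) = Σ_{i=0}^{n-1} λⁱ p(Tⁱx, Tⁱy). Then p' is a partial b-metric on X with the same coefficient s. -/
def IsPartialBMetric {X : Type*} (p : X → X → ℝ) (s : ℝ) : Prop :=
  1 ≤ s ∧
  (∀ x y, 0 ≤ p x y) ∧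
  (∀ x y : X, x = y ↔ (p x x = p x y ∧ p x y = p y y)) ∧
  (∀ x y, p x x ≤ p x y) ∧
  (∀ x y, p x y = p y x) ∧
  (∀ x y z, p x y + p z z ≤ s * (p x z + p z y))

theorem stmt_2 {X : Type*} (p : X → X → ℝ) (s : ℝ)
    (hp : IsPartialBMetric p s) (T : X → X)
    (n : ℕ) (hn : 1 < n) (K : ℝ) (hK0 : 0 < K) (hK1 : K < 1)
    (hT : ∀ x y, p (T^[n] x) (T^[n] y) ≤ K * p x y)
    (lam : ℝ) (hlam : K ^ ((1 : ℝ) / n) < 1 / lam) (hlam1 : 1 / lam < 1) (hlampos : 1 < lam) :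
    IsPartialBMetric (fun x y => ∑ i ∈ Finset.range n, lam ^ i * p (T^[i] x) (T^[i] y)) s := by
  obtain ⟨hs, hnn, hiff, hsmall, hsymm, htri⟩ := hp
  have hlpos : (0 : ℝ) < lam := lt_trans one_pos hlampos
  have hpow : ∀ i : ℕ, (0 : ℝ) < lam ^ i := fun i => pow_pos hlpos i
  refine ⟨hs, ?_, ?_, ?_, ?_, ?_⟩
  · intro x y
    exact Finset.sum_nonneg fun i _ => mul_nonneg (hpow i).le (hnn _ _)
  · intro x y
    constructor
    · rintro rfl; exact ⟨rfl, rfl⟩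
    · rintro ⟨h1, h2⟩
      have e1 := (Finset.sum_eq_sum_iff_of_le
        (fun i _ => mul_le_mul_of_nonneg_left (hsmall (T^[i] x) (T^[i] y)) (hpow i).le)).mp h1
      have e2 := (Finset.sum_eq_sum_iff_of_le
        (fun i _ => by
          have := hsmall (T^[i] y) (T^[i] x)
          rw [hsymm (T^[i] y) (T^[i] x)] at this
          exact mul_le_mul_of_nonneg_left this (hpow i).le)).mp h2.symm
      have h0 : (0:ℕ) ∈ Finset.range n := Finset.mem_range.mpr (by omega)
      have e1' := e1 0 h0
      have e2' := e2 0 h0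
      simp only [Function.iterate_zero, id_eq, pow_zero, one_mul] at e1' e2'
      exact (hiff x y).mpr ⟨e1', e2'.symm⟩
  · intro x y
    exact Finset.sum_le_sum fun i _ =>
      mul_le_mul_of_nonneg_left (hsmall _ _) (hpow i).le
  · intro x y
    exact Finset.sum_congr rfl fun i _ => by rw [hsymm]
  · intro x y z
    simp only []
    rw [← Finset.sum_add_distrib, ← Finset.sum_add_distrib, Finset.mul_sum]
    refine Finset.sum_le_sum fun i _ => ?_
    calc lam ^ i * p (T^[i] x) (T^[i] y) + lam ^ i * p (T^[i] z) (T^[i] z)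
        = lam ^ i * (p (T^[i] x) (T^[i] y) + p (T^[i] z) (T^[i] z)) := by ring
      _ ≤ lam ^ i * (s * (p (T^[i] x) (T^[i] z) + p (T^[i] z) (T^[i] y))) :=
          mul_le_mul_of_nonneg_left (htri _ _ _) (hpow i).le
      _ = s * (lam ^ i * p (T^[i] x) (T^[i] z) + lam ^ i * p (T^[i] z) (T^[i] y)) := by ring
end

section
/- Let p be a partial b-metric on X with coefficient s ≥ 1, T: X → X satisfy p(Tⁿx, Tⁿy) ≤ K p(x,y) for some n > 1 and 0 < K < 1, and let λ > 1 satisfy K^{1/n} < 1/λ. Define p'(x,y) = Σ_{i=0}^{n-1} λⁱ p(Tⁱx, Tⁱy). Then T is a contraction with constant 1/λ with respect to p', i.e. p'(Tx,Ty) ≤ (1/λ) p'(x,y) for all x,y ∈ X. -/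
theorem stmt_3 {X : Type*} (p : X → X → ℝ) (s : ℝ)
    (hp : IsPartialBMetric p s) (T : X → X)
    (n : ℕ) (hn : 1 < n) (K : ℝ) (hK0 : 0 < K) (hK1 : K < 1)
    (hT : ∀ x y, p (T^[n] x) (T^[n] y) ≤ K * p x y)
    (lam : ℝ) (hlampos : 1 < lam) (hlam : K ^ ((1 : ℝ) / n) < 1 / lam) :
    ∀ x y : X,
      (∑ i ∈ Finset.range n, lam ^ i * p (T^[i] (T x)) (T^[i] (T y))) ≤
        (1 / lam) * ∑ i ∈ Finset.range n, lam ^ i * p (T^[i] x) (T^[i] y) := by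
  intro x y
  have hlam0 : (0 : ℝ) < lam := lt_trans one_pos hlampos
  have hnpos : (0 : ℝ) < (n : ℝ) := by positivity
  -- K < (1/lam)^n, hence lam^n * K ≤ 1
  have hKpow : K < (1 / lam) ^ n := by
    have h1 : (K ^ ((1 : ℝ) / n)) ^ n < (1 / lam) ^ n := by
      apply pow_lt_pow_left₀ hlam (Real.rpow_nonneg hK0.le _)
      omega
    have h2 : (K ^ ((1 : ℝ) / n)) ^ n = K := by
      rw [← Real.rpow_natCast (K ^ ((1 : ℝ) / n)) n, ← Real.rpow_mul hK0.le]
      rw [one_div, inv_mul_cancel₀ (ne_of_gt hnpos), Real.rpow_one]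
    rwa [h2] at h1
  have hlamK : lam ^ n * K ≤ 1 := by
    have : (1 / lam) ^ n = 1 / lam ^ n := by rw [div_pow, one_pow]
    rw [this, lt_div_iff₀ (by positivity)] at hKpow
    nlinarith [hKpow]
  have hpnn := hp.2.1
  -- the telescoping identity
  set f : ℕ → ℝ := fun i => lam ^ i * p (T^[i] x) (T^[i] y) with hf
  have hshift : ∀ i, lam ^ (i + 1) * p (T^[i] (T x)) (T^[i] (T y)) = f (i + 1) := by
    intro i
    simp [hf, Function.iterate_succ_apply]
  have key : lam * (∑ i ∈ Finset.range n, lam ^ i * p (T^[i] (T x)) (T^[i] (T y)))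
      + p x y = (∑ i ∈ Finset.range n, f i) + lam ^ n * p (T^[n] x) (T^[n] y) := by
    have h1 : (∑ i ∈ Finset.range (n + 1), f i)
        = (∑ i ∈ Finset.range n, f (i + 1)) + f 0 := Finset.sum_range_succ' f n
    have h2 : (∑ i ∈ Finset.range (n + 1), f i)
        = (∑ i ∈ Finset.range n, f i) + f n := Finset.sum_range_succ f n
    have h3 : lam * (∑ i ∈ Finset.range n, lam ^ i * p (T^[i] (T x)) (T^[i] (T y)))
        = ∑ i ∈ Finset.range n, f (i + 1) := by
      rw [Finset.mul_sum]
      apply Finset.sum_congr rfl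
      intro i _
      rw [← hshift i]; ring
    have h0 : f 0 = p x y := by simp [hf]
    have hn' : f n = lam ^ n * p (T^[n] x) (T^[n] y) := rfl
    rw [h3, ← h0]
    linarith [h1, h2, hn'.symm]
  have hTn : lam ^ n * p (T^[n] x) (T^[n] y) ≤ p x y := by
    have h1 : lam ^ n * p (T^[n] x) (T^[n] y) ≤ lam ^ n * (K * p x y) := by
      apply mul_le_mul_of_nonneg_left (hT x y) (by positivity)
    have h2 : lam ^ n * (K * p x y) ≤ 1 * p x y := by
      rw [← mul_assoc]
      exact mul_le_mul_of_nonneg_right hlamK (hpnn x y)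
    linarith
  rw [div_mul_eq_mul_div, le_div_iff₀ hlam0]
  calc (∑ i ∈ Finset.range n, lam ^ i * p (T^[i] (T x)) (T^[i] (T y))) * lam
      = lam * (∑ i ∈ Finset.range n, lam ^ i * p (T^[i] (T x)) (T^[i] (T y))) := by ring
    _ ≤ ∑ i ∈ Finset.range n, f i := by linarith
    _ = 1 * ∑ i ∈ Finset.range n, lam ^ i * p (T^[i] x) (T^[i] y) := by rw [one_mul]
end

section
/- Under the hypotheses that p'(x,y) = Σ_{i=0}^{n-1} λⁱ p(Tⁱx, Tⁱy) where p(Tⁿx,Tⁿy) ≤ K p(x,y) with λⁿK < 1, the infinite series h(x,y) = Σ_{i=0}^{∞} λⁱ p(Tⁱx, Tⁱy) converges and satisfies p'(x,y) ≤ h(x,y) ≤ (1/(1−λⁿK)) p'(x,y) for all x,y ∈ X. -/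
theorem stmt_4 {X : Type*} (p : X → X → ℝ) (s : ℝ)
    (hp : IsPartialBMetric p s) (T : X → X)
    (n : ℕ) (hn : 1 < n) (K : ℝ) (hK0 : 0 < K) (hK1 : K < 1)
    (hT : ∀ x y, p (T^[n] x) (T^[n] y) ≤ K * p x y)
    (lam : ℝ) (hlampos : 1 < lam) (hlamK : lam ^ n * K < 1) :
    ∀ x y : X,
      Summable (fun i : ℕ => lam ^ i * p (T^[i] x) (T^[i] y)) ∧
      (∑ i ∈ Finset.range n, lam ^ i * p (T^[i] x) (T^[i] y)) ≤
        (∑' i : ℕ, lam ^ i * p (T^[i] x) (T^[i] y)) ∧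
      (∑' i : ℕ, lam ^ i * p (T^[i] x) (T^[i] y)) ≤
        (1 / (1 - lam ^ n * K)) * ∑ i ∈ Finset.range n, lam ^ i * p (T^[i] x) (T^[i] y) := by
  obtain ⟨hs, hpos, -, -, -, -⟩ := hp
  intro x y
  have hlam0 : (0:ℝ) < lam := lt_trans one_pos hlampos
  set rr := lam ^ n * K with hrr
  have hrr0 : 0 < rr := mul_pos (pow_pos hlam0 n) hK0
  set f : ℕ → ℝ := fun i => lam ^ i * p (T^[i] x) (T^[i] y) with hf
  have hf0 : ∀ i, 0 ≤ f i := fun i => mul_nonneg (pow_nonneg hlam0.le i) (hpos _ _)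
  have hstep : ∀ i, f (i + n) ≤ rr * f i := by
    intro i
    have h1 : p (T^[i+n] x) (T^[i+n] y) ≤ K * p (T^[i] x) (T^[i] y) := by
      rw [add_comm, Function.iterate_add_apply, Function.iterate_add_apply]
      exact hT _ _
    calc f (i+n) = lam ^ (i+n) * p (T^[i+n] x) (T^[i+n] y) := rfl
      _ ≤ lam ^ (i+n) * (K * p (T^[i] x) (T^[i] y)) :=
          mul_le_mul_of_nonneg_left h1 (pow_nonneg hlam0.le _)
      _ = rr * f i := by rw [hrr, hf, pow_add]; ring
  have hiter : ∀ q i, f (q * n + i) ≤ rr ^ q * f i := by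
    intro q
    induction q with
    | zero => intro i; simp
    | succ q ih =>
      intro i
      have he : (q+1) * n + i = (q * n + i) + n := by ring
      rw [he]
      calc f ((q*n+i)+n) ≤ rr * f (q*n+i) := hstep _
        _ ≤ rr * (rr ^ q * f i) := mul_le_mul_of_nonneg_left (ih i) hrr0.le
        _ = rr ^ (q+1) * f i := by ring
  set P := ∑ i ∈ Finset.range n, f i with hP
  have hP0 : 0 ≤ P := Finset.sum_nonneg fun i _ => hf0 i
  have hblock : ∀ Q, ∑ i ∈ Finset.range (Q * n), f i ≤ (∑ q ∈ Finset.range Q, rr ^ q) * P := by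
    intro Q
    induction Q with
    | zero => simp
    | succ Q ih =>
      rw [Nat.succ_mul, Finset.sum_range_add, Finset.sum_range_succ, add_mul]
      refine add_le_add ih ?_
      calc ∑ i ∈ Finset.range n, f (Q * n + i)
          ≤ ∑ i ∈ Finset.range n, rr ^ Q * f i :=
            Finset.sum_le_sum fun i _ => hiter Q i
        _ = rr ^ Q * P := by rw [Finset.mul_sum]
  have hgeo : Summable (fun q : ℕ => rr ^ q) := summable_geometric_of_lt_one hrr0.le hlamK
  have hbound : ∀ m, ∑ i ∈ Finset.range m, f i ≤ (1 / (1 - rr)) * P := by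
    intro m
    have h1 : ∑ i ∈ Finset.range m, f i ≤ ∑ i ∈ Finset.range (m * n), f i := by
      refine Finset.sum_le_sum_of_subset_of_nonneg ?_ (fun i _ _ => hf0 i)
      exact Finset.range_subset_range.2 (Nat.le_mul_of_pos_right m (lt_trans one_pos hn))
    have h2 : (∑ q ∈ Finset.range m, rr ^ q) ≤ 1 / (1 - rr) := by
      have := Summable.sum_le_tsum (Finset.range m) (fun i _ => (pow_nonneg hrr0.le i)) hgeo
      rwa [tsum_geometric_of_lt_one hrr0.le hlamK, ← one_div] at this
    calc ∑ i ∈ Finset.range m, f i ≤ ∑ i ∈ Finset.range (m * n), f i := h1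
      _ ≤ (∑ q ∈ Finset.range m, rr ^ q) * P := hblock m
      _ ≤ (1 / (1 - rr)) * P := mul_le_mul_of_nonneg_right h2 hP0
  have hsum : Summable f := summable_of_sum_range_le hf0 hbound
  refine ⟨hsum, ?_, ?_⟩
  · exact Summable.sum_le_tsum (Finset.range n) (fun i _ => hf0 i) hsum
  · exact Summable.tsum_le_of_sum_range_le hsum hbound
end

section
/- Let p be a partial b-metric on X, T: X → X satisfy p(Tⁿx,Tⁿy) ≤ K p(x,y) for some n > 1, 0 < K < 1, with λ > 1 chosen so K^{1/n} < 1/λ, and let p'(x,y) = Σ_{i=0}^{n-1} λⁱ p(Tⁱx,Tⁱy). If T is uniformly continuous on (X,p) and (X,p) is 0-complete, then (X,p') is 0-complete. -/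
/-- `(X,p)` is `0`-complete. -/
def ZeroComplete {X : Type*} (p : X → X → ℝ) : Prop :=
  ∀ x : ℕ → X,
    Filter.Tendsto (fun nm : ℕ × ℕ => p (x nm.1) (x nm.2)) Filter.atTop (nhds 0) →
    ∃ a : X, Filter.Tendsto (fun n => p (x n) a) Filter.atTop (nhds 0) ∧ p a a = 0

/-- Uniform continuity of `T : (X,p₁) → (Y,p₂)`. -/
def PUniformContinuous {X Y : Type*} (p₁ : X → X → ℝ) (p₂ : Y → Y → ℝ) (T : X → Y) : Prop :=
  ∀ ε > (0 : ℝ), ∃ δ > (0 : ℝ), ∀ x y : X, p₁ x y < δ → p₂ (T x) (T y) < ε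

private lemma unif_transfer {X : Type*} {p : X → X → ℝ} (hnn : ∀ x y, 0 ≤ p x y)
    {T : X → X} (hunif : PUniformContinuous p p T) {ι : Type*} {l : Filter ι}
    {x : ι → X} {y : ι → X}
    (h : Filter.Tendsto (fun n => p (x n) (y n)) l (nhds 0)) :
    Filter.Tendsto (fun n => p (T (x n)) (T (y n))) l (nhds 0) := by
  rw [Metric.tendsto_nhds] at h ⊢
  intro ε hε
  obtain ⟨δ, hδ, hd⟩ := hunif ε hε
  filter_upwards [h δ hδ] with i hi
  rw [Real.dist_eq, sub_zero, abs_of_nonneg (hnn _ _)] at hi ⊢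
  exact hd _ _ hi

private lemma iter_transfer {X : Type*} {p : X → X → ℝ} (hnn : ∀ x y, 0 ≤ p x y)
    {T : X → X} (hunif : PUniformContinuous p p T) {ι : Type*} {l : Filter ι}
    {x : ι → X} {y : ι → X}
    (h : Filter.Tendsto (fun n => p (x n) (y n)) l (nhds 0)) (i : ℕ) :
    Filter.Tendsto (fun n => p (T^[i] (x n)) (T^[i] (y n))) l (nhds 0) := by
  induction i with
  | zero => simpa using h
  | succ i ih =>
    simp only [Function.iterate_succ_apply']
    exact unif_transfer hnn hunif ih

theorem stmt_5 {X : Type*} (p : X → X → ℝ) (s : ℝ)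
    (hp : IsPartialBMetric p s) (T : X → X)
    (n : ℕ) (hn : 1 < n) (K : ℝ) (hK0 : 0 < K) (hK1 : K < 1)
    (hT : ∀ x y, p (T^[n] x) (T^[n] y) ≤ K * p x y)
    (lam : ℝ) (hlampos : 1 < lam) (hlam : K ^ ((1 : ℝ) / n) < 1 / lam)
    (hunif : PUniformContinuous p p T) (hcomp : ZeroComplete p) :
    ZeroComplete (fun x y => ∑ i ∈ Finset.range n, lam ^ i * p (T^[i] x) (T^[i] y)) := by
  obtain ⟨hs, hnn, hsep, hself, hsym, htri⟩ := hp
  intro x hx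
  have hlam0 : (0:ℝ) < lam := lt_trans one_pos hlampos
  have hterm : ∀ i ∈ Finset.range n, ∀ u v : X, 0 ≤ lam ^ i * p (T^[i] u) (T^[i] v) :=
    fun i _ u v => mul_nonneg (pow_nonneg hlam0.le i) (hnn _ _)
  -- p(x_n, x_m) tendsto 0
  have hpc : Filter.Tendsto (fun nm : ℕ × ℕ => p (x nm.1) (x nm.2)) Filter.atTop (nhds 0) := by
    apply squeeze_zero (fun nm => hnn _ _) _ hx
    intro nm
    have h0 : (0:ℕ) ∈ Finset.range n := Finset.mem_range.mpr (by omega)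
    calc p (x nm.1) (x nm.2) = lam ^ 0 * p (T^[0] (x nm.1)) (T^[0] (x nm.2)) := by simp
      _ ≤ ∑ i ∈ Finset.range n, lam ^ i * p (T^[i] (x nm.1)) (T^[i] (x nm.2)) :=
        Finset.single_le_sum (fun i hi => hterm i hi _ _) h0
  obtain ⟨a, ha, haa⟩ := hcomp x hpc
  refine ⟨a, ?_, ?_⟩
  · have : Filter.Tendsto
        (fun m => ∑ i ∈ Finset.range n, lam ^ i * p (T^[i] (x m)) (T^[i] a))
        Filter.atTop (nhds (∑ i ∈ Finset.range n, (0:ℝ))) := by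
      apply tendsto_finset_sum
      intro i _
      have := iter_transfer hnn hunif (x := x) (y := fun _ => a) ha i
      simpa using (this.const_mul (lam ^ i))
    simpa using this
  · have hz : ∀ i : ℕ, p (T^[i] a) (T^[i] a) = 0 := by
      intro i
      have hia := iter_transfer hnn hunif (x := x) (y := fun _ => a) ha i
      have hle : ∀ m, p (T^[i] a) (T^[i] a) ≤ p (T^[i] (x m)) (T^[i] a) := by
        intro m
        exact (hself _ _).trans_eq (hsym _ _)
      have := ge_of_tendsto hia (Filter.Eventually.of_forall hle)
      exact le_antisymm this (hnn _ _)
    simp [hz]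
end

section
/- Let (X,p) be a partial b-metric space with coefficient s ≥ 1, T: X → X, and (xₙ) a sequence with xₙ₊₁ = Txₙ satisfying p(xₙ, xₙ₊₁) ≤ λ p(xₙ₋₁, xₙ) for all n, where λ ∈ [0,1). Then (xₙ) is a 0-Cauchy sequence, i.e. lim_{n,m→∞} p(xₙ,xₘ) = 0. -/
theorem stmt_10 {X : Type*} (p : X → X → ℝ) (s : ℝ)
    (hp : IsPartialBMetric p s) (T : X → X)
    (x : ℕ → X) (hx : ∀ n : ℕ, x (n + 1) = T (x n))
    (lam : ℝ) (hl0 : 0 ≤ lam) (hl1 : lam < 1)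
    (hdec : ∀ n : ℕ, p (x (n + 1)) (x (n + 2)) ≤ lam * p (x n) (x (n + 1))) :
    Filter.Tendsto (fun nm : ℕ × ℕ => p (x nm.1) (x nm.2)) Filter.atTop (nhds 0) := by
  obtain ⟨hs, hpos, -, hself, hsymm, htri'⟩ := hp
  have hs0 : (0:ℝ) < s := lt_of_lt_of_le one_pos hs
  -- triangle inequality
  have htri : ∀ a b c : X, p a b ≤ s * (p a c + p c b) := by
    intro a b c
    have := htri' a b c
    have h2 := hpos c c
    linarith
  -- chain inequality
  have hchain : ∀ r : ℕ, ∀ b : ℕ → X,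
      p (b 0) (b (r+1)) ≤ ∑ i ∈ Finset.range (r+1), s ^ (i+1) * p (b i) (b (i+1)) := by
    intro r
    induction r with
    | zero =>
      intro b
      rw [Finset.sum_range_one]
      simp only [zero_add, pow_one]
      nlinarith [hpos (b 0) (b 1)]
    | succ r ih =>
      intro b
      have h1 : p (b 0) (b (r+2)) ≤ s * (p (b 0) (b 1) + p (b 1) (b (r+2))) :=
        htri (b 0) (b (r+2)) (b 1)
      have h2 := ih (fun i => b (i+1))
      have hsum : ∑ i ∈ Finset.range (r+2), s ^ (i+1) * p (b i) (b (i+1))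
          = (∑ i ∈ Finset.range (r+1), s ^ (i+2) * p (b (i+1)) (b (i+2)))
            + s ^ 1 * p (b 0) (b 1) := by
        rw [Finset.sum_range_succ']
      show p (b 0) (b (r+2)) ≤ _
      rw [hsum]
      have h3 : s * (∑ i ∈ Finset.range (r+1), s ^ (i+1) * p (b (i+1)) (b (i+2)))
          = ∑ i ∈ Finset.range (r+1), s ^ (i+2) * p (b (i+1)) (b (i+2)) := by
        rw [Finset.mul_sum]
        refine Finset.sum_congr rfl fun i _ => by ring
      calc p (b 0) (b (r+2)) ≤ s * (p (b 0) (b 1) + p (b 1) (b (r+2))) := h1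
        _ ≤ s * (p (b 0) (b 1) + ∑ i ∈ Finset.range (r+1), s ^ (i+1) * p (b (i+1)) (b (i+2))) := by
            have := mul_le_mul_of_nonneg_left (add_le_add_right h2 (p (b 0) (b 1))) hs0.le
            exact this
        _ = (∑ i ∈ Finset.range (r+1), s ^ (i+2) * p (b (i+1)) (b (i+2)))
            + s ^ 1 * p (b 0) (b 1) := by
            rw [mul_add, h3, pow_one, add_comm]
  set d : ℕ → ℝ := fun k => p (x k) (x (k+1)) with hd_def
  have hdnn : ∀ k, 0 ≤ d k := fun k => hpos _ _
  have hd : ∀ k, d k ≤ lam ^ k * d 0 := by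
    intro k
    induction k with
    | zero => simp
    | succ k ih =>
      calc d (k+1) ≤ lam * d k := hdec k
        _ ≤ lam * (lam ^ k * d 0) := by
            exact mul_le_mul_of_nonneg_left ih hl0
        _ = lam ^ (k+1) * d 0 := by ring
  -- choose N with s * lam ^ N < 1
  obtain ⟨N, hN⟩ : ∃ N : ℕ, lam ^ N < 1 / s := by
    rcases exists_pow_lt_of_lt_one (by positivity : (0:ℝ) < 1 / s) hl1 with ⟨N, hN⟩
    exact ⟨N, hN⟩
  have hNpos : 0 < N := by
    by_contra h
    push_neg at h
    interval_cases N
    simp only [pow_zero] at hN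
    rw [lt_div_iff₀ hs0, one_mul] at hN
    linarith
  have hsl : s * lam ^ N < 1 := by
    rw [mul_comm]
    exact (lt_div_iff₀ hs0).mp hN
  have hsl0 : 0 ≤ s * lam ^ N := by positivity
  set K : ℝ := (∑ j ∈ Finset.range N, s ^ (j+1) * lam ^ j) * d 0 with hK_def
  have hK0 : 0 ≤ K := by
    apply mul_nonneg _ (hdnn 0)
    apply Finset.sum_nonneg
    intro j _
    positivity
  -- step 1: short hops
  have hstep1 : ∀ n t : ℕ, 1 ≤ t → t ≤ N → p (x n) (x (n + t)) ≤ lam ^ n * K := by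
    intro n t ht1 htN
    obtain ⟨u, rfl⟩ : ∃ u, t = u + 1 := ⟨t - 1, by omega⟩
    have h1 := hchain u (fun i => x (n + i))
    calc p (x n) (x (n + (u+1))) = p (x (n+0)) (x (n+(u+1))) := by norm_num
      _ ≤ ∑ i ∈ Finset.range (u+1), s ^ (i+1) * p (x (n+i)) (x (n+(i+1))) := h1
      _ ≤ ∑ i ∈ Finset.range (u+1), s ^ (i+1) * (lam ^ (n+i) * d 0) := by
          apply Finset.sum_le_sum
          intro i _
          apply mul_le_mul_of_nonneg_left _ (by positivity)
          have := hd (n+i)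
          simpa [hd_def, Nat.add_assoc] using this
      _ = lam ^ n * ((∑ i ∈ Finset.range (u+1), s ^ (i+1) * lam ^ i) * d 0) := by
          rw [Finset.sum_mul, Finset.mul_sum]
          refine Finset.sum_congr rfl fun i _ => by rw [pow_add]; ring
      _ ≤ lam ^ n * K := by
          apply mul_le_mul_of_nonneg_left _ (by positivity)
          rw [hK_def]
          apply mul_le_mul_of_nonneg_right _ (hdnn 0)
          apply Finset.sum_le_sum_of_subset_of_nonneg
          · exact Finset.range_subset_range.mpr (by omega)
          · intro j _ _; positivity
  -- geometric sum bound
  have hgeom : ∀ q : ℕ, ∑ i ∈ Finset.range q, (s * lam ^ N) ^ i ≤ (1 - s * lam ^ N)⁻¹ := by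
    intro q
    have hsummable := summable_geometric_of_lt_one hsl0 hsl
    calc ∑ i ∈ Finset.range q, (s * lam ^ N) ^ i
        ≤ ∑' i : ℕ, (s * lam ^ N) ^ i :=
          Summable.sum_le_tsum _ (fun i _ => by positivity) hsummable
      _ = (1 - s * lam ^ N)⁻¹ := tsum_geometric_of_lt_one hsl0 hsl
  set C : ℝ := s * (1 - s * lam ^ N)⁻¹ * K with hC_def
  have hinv1 : (1:ℝ) ≤ (1 - s * lam ^ N)⁻¹ := by
    rw [le_inv_comm₀ one_pos (by linarith)]
    simp only [inv_one]
    linarith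
  have hC0 : 0 ≤ C := by
    apply mul_nonneg _ hK0
    positivity
  -- main bound for n < m
  have hmain : ∀ n m : ℕ, n < m → p (x n) (x m) ≤ lam ^ n * C := by
    intro n m hnm
    set t := m - n with ht_def
    have ht1 : 1 ≤ t := by omega
    set qd := (t - 1) / N with hqd_def
    have hdm : N * qd + (t - 1) % N = t - 1 := Nat.div_add_mod (t - 1) N
    have hmod := Nat.mod_lt (t - 1) hNpos
    have hqN : (qd + 1) * N = N * qd + N := by ring
    have hqm : m ≤ n + (qd + 1) * N := by omega
    have hiq : ∀ i, i < qd + 1 → n + i * N < m := by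
      intro i hi
      have hile : i ≤ qd := by omega
      have h1 : i * N ≤ qd * N := Nat.mul_le_mul_right N hile
      have h2 : qd * N = N * qd := mul_comm _ _
      omega
    set b : ℕ → X := fun i => x (min (n + i * N) m) with hb_def
    have hb0 : b 0 = x n := by
      simp [hb_def, Nat.min_eq_left hnm.le]
    have hbq : b (qd + 1) = x m := by
      simp [hb_def, Nat.min_eq_right hqm]
    have h1 := hchain qd b
    rw [hb0, hbq] at h1
    have hhop : ∀ i, i < qd + 1 → p (b i) (b (i+1)) ≤ lam ^ (n + i * N) * K := by
      intro i hi
      have hlt := hiq i hi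
      have hbi : b i = x (n + i * N) := by
        simp [hb_def, Nat.min_eq_left hlt.le]
      have hB : (i+1) * N = i * N + N := by ring
      set u := min (n + (i+1) * N) m - (n + i * N) with hu_def
      have hu1 : 1 ≤ u := by
        have h3 : n + i * N < min (n + (i+1) * N) m := by
          apply lt_min _ hlt
          omega
        omega
      have huN : u ≤ N := by
        have h4 : min (n + (i+1) * N) m ≤ n + (i+1) * N := min_le_left _ _
        omega
      have hbi1 : b (i+1) = x ((n + i * N) + u) := by
        have h5 : min (n + (i+1) * N) m = (n + i * N) + u := by
          have h4 : min (n + (i+1) * N) m ≤ n + (i+1) * N := min_le_left _ _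
          have h6 : min (n + (i+1) * N) m ≤ m := min_le_right _ _
          omega
        simp only [hb_def]
        rw [h5]
      rw [hbi, hbi1]
      exact hstep1 (n + i * N) u hu1 huN
    calc p (x n) (x m) ≤ ∑ i ∈ Finset.range (qd+1), s ^ (i+1) * p (b i) (b (i+1)) := h1
      _ ≤ ∑ i ∈ Finset.range (qd+1), s ^ (i+1) * (lam ^ (n + i * N) * K) := by
          apply Finset.sum_le_sum
          intro i hi
          exact mul_le_mul_of_nonneg_left (hhop i (Finset.mem_range.mp hi)) (by positivity)
      _ = lam ^ n * (s * ((∑ i ∈ Finset.range (qd+1), (s * lam ^ N) ^ i) * K)) := by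
          rw [Finset.sum_mul, Finset.mul_sum, Finset.mul_sum]
          refine Finset.sum_congr rfl fun i _ => ?_
          rw [pow_add, pow_add, mul_pow, ← pow_mul, Nat.mul_comm N i]
          ring
      _ ≤ lam ^ n * (s * ((1 - s * lam ^ N)⁻¹ * K)) := by
          apply mul_le_mul_of_nonneg_left _ (by positivity)
          apply mul_le_mul_of_nonneg_left _ hs0.le
          exact mul_le_mul_of_nonneg_right (hgeom (qd+1)) hK0
      _ = lam ^ n * C := by rw [hC_def]; ring
  -- bound for all n m
  have hKd0 : d 0 ≤ K := by
    rw [hK_def]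
    have : (1:ℝ) ≤ ∑ j ∈ Finset.range N, s ^ (j+1) * lam ^ j := by
      have h0 := Finset.single_le_sum (f := fun j => s ^ (j+1) * lam ^ j)
        (fun i _ => by positivity) (Finset.mem_range.mpr hNpos)
      simp only [zero_add, pow_one, pow_zero, mul_one] at h0
      linarith
    nlinarith [hdnn 0]
  have hbound : ∀ n m : ℕ, p (x n) (x m) ≤ C * lam ^ (min n m) := by
    have key : ∀ n m : ℕ, n ≤ m → p (x n) (x m) ≤ C * lam ^ n := by
      intro n m hnm
      rcases eq_or_lt_of_le hnm with rfl | hlt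
      · calc p (x n) (x n) ≤ d n := hself _ _
          _ ≤ lam ^ n * d 0 := hd n
          _ ≤ lam ^ n * C := by
              apply mul_le_mul_of_nonneg_left _ (by positivity)
              calc d 0 ≤ K := hKd0
                _ = 1 * 1 * K := by ring
                _ ≤ s * (1 - s * lam ^ N)⁻¹ * K := by
                    apply mul_le_mul_of_nonneg_right _ hK0
                    apply mul_le_mul hs hinv1 zero_le_one hs0.le
          _ = C * lam ^ n := mul_comm _ _
      · linarith [hmain n m hlt, (mul_comm (lam ^ n) C)]
    intro n m
    rcases le_total n m with h | h
    · rw [min_eq_left h]; exact key n m h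
    · rw [min_eq_right h, hsymm (x n) (x m)]; exact key m n h
  -- conclude via squeeze
  have hmin : Filter.Tendsto (fun nm : ℕ × ℕ => min nm.1 nm.2) Filter.atTop Filter.atTop := by
    rw [Filter.tendsto_atTop]
    intro b
    filter_upwards [Filter.eventually_ge_atTop ((b, b) : ℕ × ℕ)] with nm hnm
    exact le_min hnm.1 hnm.2
  have hpow : Filter.Tendsto (fun nm : ℕ × ℕ => C * lam ^ (min nm.1 nm.2))
      Filter.atTop (nhds 0) := by
    have h1 : Filter.Tendsto (fun k : ℕ => lam ^ k) Filter.atTop (nhds 0) :=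
      tendsto_pow_atTop_nhds_zero_of_lt_one hl0 hl1
    have := (h1.comp hmin).const_mul C
    simpa using this
  exact squeeze_zero (fun nm => hpos _ _) (fun nm => hbound nm.1 nm.2) hpow
end

section
/- Under the Chatterjea–Kannan contractive condition on a 0-complete partial b-metric space with coefficient s ≥ 1 (five nonnegative constants λ₁,…,λ₅ with λ₁ + λ₂ + 2sλ₃ + sλ₄ + sλ₅ < 1), the Picard iterates xₙ₊₁ = Txₙ satisfy p(xₙ, xₙ₊₁) ≤ λ p(xₙ₋₁, xₙ) where λ = (2λ₁ + 2sλ₃ + sλ₄ + sλ₅)/(2 − 2λ₂ − 2sλ₃ − sλ₄ − sλ₅), and 0 ≤ λ < 1. -/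
set_option maxHeartbeats 1000000 in
private lemma key_step {X : Type*} (p : X → X → ℝ) (s : ℝ)
    (hp : IsPartialBMetric p s) (T : X → X)
    (l₁ l₂ l₃ l₄ l₅ : ℝ)
    (h₁ : 0 ≤ l₁) (h₂ : 0 ≤ l₂) (h₃ : 0 ≤ l₃) (h₄ : 0 ≤ l₄) (h₅ : 0 ≤ l₅)
    (hsum : l₁ + l₂ + 2 * s * l₃ + s * l₄ + s * l₅ < 1)
    (hT : ∀ x y, p (T x) (T y) ≤
      l₁ * p x y + l₂ * (p x (T x) * p y (T y) / (1 + p x y)) +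
      l₃ * (p x (T y) * p y (T x) / (1 + p x y)) +
      l₄ * (p x (T x) * p x (T y) / (1 + p x y)) +
      l₅ * (p y (T y) * p y (T x) / (1 + p x y)))
    (a : X) :
    p (T a) (T (T a)) ≤
      (2 * l₁ + 2 * s * l₃ + s * l₄ + s * l₅) /
        (2 - 2 * l₂ - 2 * s * l₃ - s * l₄ - s * l₅) * p a (T a) := by
  obtain ⟨hs, hpos, _, hsmall, hsym, htri⟩ := hp
  set b := T a with hb
  set c := T b with hc
  set P := p a b with hP
  set Q := p b c with hQ
  set A := p a c with hA
  set B := p b b with hB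
  have hs0 : (0:ℝ) ≤ s := by linarith
  have hP0 : 0 ≤ P := hpos a b
  have hQ0 : 0 ≤ Q := hpos b c
  have hA0 : 0 ≤ A := hpos a c
  have hB0 : 0 ≤ B := hpos b b
  have hBP : B ≤ P := by
    have h1 : p b b ≤ p b a := hsmall b a
    have h2 : p b a = p a b := hsym b a
    rw [h2] at h1; exact h1
  have hD : (0:ℝ) < 1 + P := by linarith
  have htriangle : A + B ≤ s * (P + Q) := htri a c b
  -- first contraction instance
  have hI : Q ≤ l₁ * P + l₂ * (P * Q / (1 + P)) + l₃ * (A * B / (1 + P)) +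
      l₄ * (P * A / (1 + P)) + l₅ * (Q * B / (1 + P)) := by
    have h := hT a b
    simpa [← hb, ← hc, ← hP, ← hQ, ← hA, ← hB] using h
  -- second contraction instance
  have hII : Q ≤ l₁ * P + l₂ * (Q * P / (1 + P)) + l₃ * (B * A / (1 + P)) +
      l₄ * (Q * B / (1 + P)) + l₅ * (P * A / (1 + P)) := by
    have h := hT b a
    have e1 : p (T b) (T a) = Q := by rw [← hb, ← hc]; exact hsym c b
    have e2 : p b a = P := hsym b a
    rw [e1, e2, ← hb, ← hc, ← hP, ← hQ, ← hA, ← hB] at h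
    exact h
  -- clear denominators
  have hI2 : Q * (1 + P) ≤ l₁ * P * (1 + P) + l₂ * (P * Q) + l₃ * (A * B) +
      l₄ * (P * A) + l₅ * (Q * B) := by
    have h := mul_le_mul_of_nonneg_right hI hD.le
    have e : (l₁ * P + l₂ * (P * Q / (1 + P)) + l₃ * (A * B / (1 + P)) +
        l₄ * (P * A / (1 + P)) + l₅ * (Q * B / (1 + P))) * (1 + P)
        = l₁ * P * (1 + P) + l₂ * (P * Q) + l₃ * (A * B) +
          l₄ * (P * A) + l₅ * (Q * B) := by
      field_simp
    rw [e] at h; exact h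
  have hII2 : Q * (1 + P) ≤ l₁ * P * (1 + P) + l₂ * (P * Q) + l₃ * (A * B) +
      l₄ * (Q * B) + l₅ * (P * A) := by
    have h := mul_le_mul_of_nonneg_right hII hD.le
    have e : (l₁ * P + l₂ * (Q * P / (1 + P)) + l₃ * (B * A / (1 + P)) +
        l₄ * (Q * B / (1 + P)) + l₅ * (P * A / (1 + P))) * (1 + P)
        = l₁ * P * (1 + P) + l₂ * (P * Q) + l₃ * (A * B) +
          l₄ * (Q * B) + l₅ * (P * A) := by
      field_simp
    rw [e] at h; exact h
  -- eliminate A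
  have hprod : 0 ≤ (2 * l₃ * B + (l₄ + l₅) * P) * (s * (P + Q) - B - A) := by
    apply mul_nonneg
    · have : 0 ≤ 2 * l₃ * B := by positivity
      have : 0 ≤ (l₄ + l₅) * P := by positivity
      nlinarith [mul_nonneg (mul_nonneg (by norm_num : (0:ℝ) ≤ 2) h₃) hB0]
    · linarith
  -- Q * c ≤ R
  have hQc : Q * (2 * (1 + P) - 2 * l₂ * P - (2 * s * l₃ + (l₄ + l₅)) * B
        - s * (l₄ + l₅) * P)
      ≤ 2 * l₁ * P * (1 + P) + (2 * l₃ * B + (l₄ + l₅) * P) * (s * P - B) := by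
    nlinarith [hI2, hII2, hprod, sq_nonneg B]
  -- positivity of c
  have hslack : 0 ≤ (s - 1) * (l₄ + l₅) := by
    apply mul_nonneg (by linarith) (by linarith)
  have hsl3 : 0 ≤ s * l₃ := mul_nonneg hs0 h₃
  have hsl4 : 0 ≤ s * l₄ := mul_nonneg hs0 h₄
  have hsl5 : 0 ≤ s * l₅ := mul_nonneg hs0 h₅
  have hcpos : 0 < 2 * (1 + P) - 2 * l₂ * P - (2 * s * l₃ + (l₄ + l₅)) * B
      - s * (l₄ + l₅) * P := by
    nlinarith [mul_nonneg (by linarith : (0:ℝ) ≤ 2 * s * l₃ + (l₄ + l₅)) (by linarith : (0:ℝ) ≤ P - B),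
      mul_nonneg h₂ hP0, mul_nonneg hsl3 hP0,
      mul_nonneg (mul_nonneg (by linarith : (0:ℝ) ≤ s - 1) (by linarith : (0:ℝ) ≤ l₄ + l₅)) hP0,
      mul_nonneg hsl4 hP0, mul_nonneg hsl5 hP0,
      mul_nonneg (by linarith : (0:ℝ) ≤ l₁) hP0, mul_nonneg h₂ hP0]
  set M := 2 - 2 * l₂ - 2 * s * l₃ - s * l₄ - s * l₅ with hM
  set N := 2 * l₁ + 2 * s * l₃ + s * l₄ + s * l₅ with hN
  have hN0 : 0 ≤ N := by rw [hN]; linarith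
  have hMN : N < M := by rw [hM, hN]; linarith
  have hM0 : 0 < M := lt_of_le_of_lt hN0 hMN
  -- main polynomial certificate : M * R ≤ N * P * c
  have hkey : M * (2 * l₁ * P * (1 + P) + (2 * l₃ * B + (l₄ + l₅) * P) * (s * P - B))
      ≤ N * P * (2 * (1 + P) - 2 * l₂ * P - (2 * s * l₃ + (l₄ + l₅)) * B
        - s * (l₄ + l₅) * P) := by
    have hident : N * P * (2 * (1 + P) - 2 * l₂ * P - (2 * s * l₃ + (l₄ + l₅)) * B
          - s * (l₄ + l₅) * P)
        - M * (2 * l₁ * P * (1 + P) + (2 * l₃ * B + (l₄ + l₅) * P) * (s * P - B))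
        = (2 * l₁ * (2 * l₂ + 2 * s * l₃ + s * (l₄ + l₅)) + 2 * (2 * s * l₃ + s * (l₄ + l₅))) * P
          + 2 * s * l₃ * (M + N) * (P * (P - B))
          + (l₄ + l₅) * (M - N) * (P * B)
          + 2 * M * l₃ * B ^ 2 := by
      rw [hM, hN]; ring
    have t1 : 0 ≤ (2 * l₁ * (2 * l₂ + 2 * s * l₃ + s * (l₄ + l₅))
        + 2 * (2 * s * l₃ + s * (l₄ + l₅))) * P := by
      apply mul_nonneg _ hP0
      have : 0 ≤ 2 * l₂ + 2 * s * l₃ + s * (l₄ + l₅) := by linarith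
      nlinarith
    have t2 : 0 ≤ 2 * s * l₃ * (M + N) * (P * (P - B)) := by
      apply mul_nonneg (by nlinarith) (mul_nonneg hP0 (by linarith))
    have t3 : 0 ≤ (l₄ + l₅) * (M - N) * (P * B) := by
      apply mul_nonneg (mul_nonneg (by linarith) (by linarith)) (mul_nonneg hP0 hB0)
    have t4 : 0 ≤ 2 * M * l₃ * B ^ 2 := by positivity
    linarith
  -- conclude M * Q ≤ N * P
  have hfinal : M * Q ≤ N * P := by
    have h1 : M * Q * (2 * (1 + P) - 2 * l₂ * P - (2 * s * l₃ + (l₄ + l₅)) * B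
        - s * (l₄ + l₅) * P) ≤ N * P * (2 * (1 + P) - 2 * l₂ * P
        - (2 * s * l₃ + (l₄ + l₅)) * B - s * (l₄ + l₅) * P) := by
      calc M * Q * (2 * (1 + P) - 2 * l₂ * P - (2 * s * l₃ + (l₄ + l₅)) * B
            - s * (l₄ + l₅) * P)
          = M * (Q * (2 * (1 + P) - 2 * l₂ * P - (2 * s * l₃ + (l₄ + l₅)) * B
            - s * (l₄ + l₅) * P)) := by ring
        _ ≤ M * (2 * l₁ * P * (1 + P) + (2 * l₃ * B + (l₄ + l₅) * P) * (s * P - B)) :=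
            mul_le_mul_of_nonneg_left hQc hM0.le
        _ ≤ N * P * (2 * (1 + P) - 2 * l₂ * P - (2 * s * l₃ + (l₄ + l₅)) * B
            - s * (l₄ + l₅) * P) := hkey
    exact le_of_mul_le_mul_right h1 hcpos
  rw [div_mul_eq_mul_div, le_div_iff₀ hM0]
  calc p b c * M = M * Q := by rw [hQ]; ring
    _ ≤ N * P := hfinal
    _ = N * p a b := by rw [hP]

theorem stmt_12 {X : Type*} (p : X → X → ℝ) (s : ℝ)
    (hp : IsPartialBMetric p s) (T : X → X)
    (l₁ l₂ l₃ l₄ l₅ : ℝ)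
    (h₁ : 0 ≤ l₁) (h₂ : 0 ≤ l₂) (h₃ : 0 ≤ l₃) (h₄ : 0 ≤ l₄) (h₅ : 0 ≤ l₅)
    (hsum : l₁ + l₂ + 2 * s * l₃ + s * l₄ + s * l₅ < 1)
    (hT : ∀ x y, p (T x) (T y) ≤
      l₁ * p x y + l₂ * (p x (T x) * p y (T y) / (1 + p x y)) +
      l₃ * (p x (T y) * p y (T x) / (1 + p x y)) +
      l₄ * (p x (T x) * p x (T y) / (1 + p x y)) +
      l₅ * (p y (T y) * p y (T x) / (1 + p x y)))
    (x₀ : X) :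
    (0 ≤ (2 * l₁ + 2 * s * l₃ + s * l₄ + s * l₅) /
        (2 - 2 * l₂ - 2 * s * l₃ - s * l₄ - s * l₅)) ∧
    ((2 * l₁ + 2 * s * l₃ + s * l₄ + s * l₅) /
        (2 - 2 * l₂ - 2 * s * l₃ - s * l₄ - s * l₅) < 1) ∧
    ∀ n : ℕ, p (T^[n + 1] x₀) (T^[n + 2] x₀) ≤
      (2 * l₁ + 2 * s * l₃ + s * l₄ + s * l₅) /
        (2 - 2 * l₂ - 2 * s * l₃ - s * l₄ - s * l₅) * p (T^[n] x₀) (T^[n + 1] x₀) := by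
  have hs : 1 ≤ s := hp.1
  have hs0 : (0:ℝ) ≤ s := by linarith
  have hsl3 : 0 ≤ s * l₃ := mul_nonneg hs0 h₃
  have hsl4 : 0 ≤ s * l₄ := mul_nonneg hs0 h₄
  have hsl5 : 0 ≤ s * l₅ := mul_nonneg hs0 h₅
  have hN0 : 0 ≤ 2 * l₁ + 2 * s * l₃ + s * l₄ + s * l₅ := by linarith
  have hMN : 2 * l₁ + 2 * s * l₃ + s * l₄ + s * l₅
      < 2 - 2 * l₂ - 2 * s * l₃ - s * l₄ - s * l₅ := by linarith
  have hM0 : (0:ℝ) < 2 - 2 * l₂ - 2 * s * l₃ - s * l₄ - s * l₅ :=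
    lt_of_le_of_lt hN0 hMN
  refine ⟨div_nonneg hN0 hM0.le, (div_lt_one hM0).2 hMN, fun n => ?_⟩
  have h1 : T^[n + 1] x₀ = T (T^[n] x₀) := Function.iterate_succ_apply' T n x₀
  have h2 : T^[n + 2] x₀ = T (T (T^[n] x₀)) := by
    rw [Function.iterate_succ_apply' T (n+1) x₀, h1]
  rw [h1, h2]
  exact key_step p s hp T l₁ l₂ l₃ l₄ l₅ h₁ h₂ h₃ h₄ h₅ hsum hT (T^[n] x₀)
end

section
/- Let (X,p) be a 0-complete partial b-metric space with coefficient s ≥ 1 and T satisfy the Chatterjea–Kannan condition with constants λ₁,…,λ₅ ≥ 0, λ₁ + λ₂ + 2sλ₃ + sλ₄ + sλ₅ < 1, and additionally 2sλ₁ + 2λ₃ + (s + s²)(λ₄ + λ₅) < 2. Then Picard's iteration is T-stable: if x* is the unique fixed point of T and (yₙ) is any sequence with limₙ p(yₙ₊₁, Tyₙ) = 0, then limₙ p(yₙ, x*) = 0 = p(x*,x*), i.e. yₙ converges to x* in τ(p). -/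
set_option maxHeartbeats 1000000



lemma aux_rec_tendsto {a c : ℕ → ℝ} {h : ℝ} (h0 : 0 ≤ h) (h1 : h < 1)
    (ha : ∀ n, 0 ≤ a n) (hrec : ∀ n, a (n + 1) ≤ h * a n + c n)
    (hc : Filter.Tendsto c Filter.atTop (nhds 0)) :
    Filter.Tendsto a Filter.atTop (nhds 0) := by
  rw [Metric.tendsto_atTop]
  intro ε hε
  have hd : 0 < 1 - h := by linarith
  obtain ⟨N, hN⟩ := (Metric.tendsto_atTop.mp hc) (ε * (1 - h) / 2) (by positivity)
  have hcb : ∀ n ≥ N, c n ≤ ε * (1 - h) / 2 := by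
    intro n hn
    have := hN n hn
    rw [Real.dist_eq, sub_zero] at this
    exact le_of_lt (lt_of_abs_lt this)
  have key : ∀ k, a (N + k) ≤ h ^ k * a N + ε / 2 := by
    intro k
    induction k with
    | zero => simp; linarith
    | succ k ih =>
      have hc' := hcb (N + k) (Nat.le_add_right _ _)
      have hr := hrec (N + k)
      have : N + (k + 1) = (N + k) + 1 := by ring
      rw [this]
      have hm : h * a (N + k) ≤ h * (h ^ k * a N + ε / 2) :=
        mul_le_mul_of_nonneg_left ih h0
      have hpow : h * (h ^ k * a N) = h ^ (k + 1) * a N := by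
        rw [pow_succ]; ring
      nlinarith
  have hpowt : Filter.Tendsto (fun k => h ^ k * a N) Filter.atTop (nhds 0) := by
    have := (tendsto_pow_atTop_nhds_zero_of_lt_one h0 h1).mul_const (a N)
    simpa using this
  obtain ⟨K, hK⟩ := (Metric.tendsto_atTop.mp hpowt) (ε / 2) (by positivity)
  refine ⟨N + K, fun n hn => ?_⟩
  have hNn : N ≤ n := le_trans (Nat.le_add_right _ _) hn
  have hKn : K ≤ n - N := by omega
  have hrw : N + (n - N) = n := by omega
  have h1' : a n ≤ h ^ (n - N) * a N + ε / 2 := by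
    have := key (n - N); rwa [hrw] at this
  have h2' : h ^ (n - N) ≤ h ^ K := pow_le_pow_of_le_one h0 (le_of_lt h1) hKn
  have h3' : h ^ (n - N) * a N ≤ h ^ K * a N :=
    mul_le_mul_of_nonneg_right h2' (ha N)
  have h4' := hK K le_rfl
  rw [Real.dist_eq, sub_zero] at h4'
  have h5' : h ^ K * a N < ε / 2 := lt_of_abs_lt h4'
  rw [Real.dist_eq, sub_zero, abs_of_nonneg (ha n)]
  linarith


theorem stmt_15 {X : Type*} (p : X → X → ℝ) (s : ℝ)
    (hp : IsPartialBMetric p s) (hc : ZeroComplete p) (T : X → X)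
    (l₁ l₂ l₃ l₄ l₅ : ℝ)
    (h₁ : 0 ≤ l₁) (h₂ : 0 ≤ l₂) (h₃ : 0 ≤ l₃) (h₄ : 0 ≤ l₄) (h₅ : 0 ≤ l₅)
    (hsum : l₁ + l₂ + 2 * s * l₃ + s * l₄ + s * l₅ < 1)
    (hstab : 2 * s * l₁ + 2 * l₃ + (s + s ^ 2) * (l₄ + l₅) < 2)
    (hT : ∀ x y, p (T x) (T y) ≤
      l₁ * p x y + l₂ * (p x (T x) * p y (T y) / (1 + p x y)) +
      l₃ * (p x (T y) * p y (T x) / (1 + p x y)) +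
      l₄ * (p x (T x) * p x (T y) / (1 + p x y)) +
      l₅ * (p y (T y) * p y (T x) / (1 + p x y)))
    (xstar : X) (hfix : T xstar = xstar)
    (y : ℕ → X)
    (hy : Filter.Tendsto (fun n => p (y (n + 1)) (T (y n))) Filter.atTop (nhds 0)) :
    Filter.Tendsto (fun n => p (y n) xstar) Filter.atTop (nhds 0) ∧ p xstar xstar = 0 := by
  obtain ⟨hs, hpos, heq, hsmall, hsym, htri⟩ := hp
  have hs0 : (0:ℝ) ≤ s := by linarith
  -- p xstar xstar = 0
  have hq : p xstar xstar = 0 := by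
    have hqi := hT xstar xstar
    rw [hfix] at hqi
    have hq0 : 0 ≤ p xstar xstar := hpos _ _
    have h1q : 0 < 1 + p xstar xstar := by linarith
    have hkey : p xstar xstar * p xstar xstar / (1 + p xstar xstar) ≤ p xstar xstar := by
      rw [div_le_iff₀ h1q]; nlinarith
    nlinarith [mul_le_mul_of_nonneg_left hkey h₂, mul_le_mul_of_nonneg_left hkey h₃,
      mul_le_mul_of_nonneg_left hkey h₄, mul_le_mul_of_nonneg_left hkey h₅,
      mul_nonneg h₃ hq0, mul_nonneg h₄ hq0, mul_nonneg h₅ hq0,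
      mul_nonneg (mul_nonneg h₃ (by linarith : (0:ℝ) ≤ 2*s - 1)) hq0,
      mul_nonneg (mul_nonneg h₄ (by linarith : (0:ℝ) ≤ s - 1)) hq0,
      mul_nonneg (mul_nonneg h₅ (by linarith : (0:ℝ) ≤ s - 1)) hq0]
  refine ⟨?_, hq⟩
  set μ : ℝ := l₃ + s * (l₄ + l₅) / 2 with hμ
  set ν : ℝ := l₁ + s * (l₄ + l₅) / 2 with hν
  have hd : 0 < 1 - μ := by
    have t1 : 0 ≤ s * l₁ := mul_nonneg hs0 h₁
    have t2 : 0 ≤ s^2 * l₄ := mul_nonneg (by positivity) h₄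
    have t3 : 0 ≤ s^2 * l₅ := mul_nonneg (by positivity) h₅
    rw [hμ]; nlinarith
  have hν0 : 0 ≤ ν := by
    rw [hν]; positivity
  set κ : ℝ := s * ν / (1 - μ) with hκ
  have hκ0 : 0 ≤ κ := by rw [hκ]; positivity
  have hκ1 : κ < 1 := by
    rw [hκ, div_lt_one hd, hν, hμ]; nlinarith
  have key : ∀ n, p (y (n + 1)) xstar ≤ κ * p (y n) xstar + s * p (y (n + 1)) (T (y n)) := by
    intro n
    have hA0 : 0 ≤ p (y n) xstar := hpos _ _
    have hB0 : 0 ≤ p (T (y n)) xstar := hpos _ _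
    have hD0 : 0 ≤ p (y n) (T (y n)) := hpos _ _
    have h1A : 0 < 1 + p (y n) xstar := by linarith
    have hsym1 : p xstar (T (y n)) = p (T (y n)) xstar := hsym _ _
    have hsym2 : p xstar (y n) = p (y n) xstar := hsym _ _
    have i1 := hT (y n) xstar
    rw [hfix, hq, hsym1] at i1
    have i2 := hT xstar (y n)
    rw [hfix, hq, hsym1, hsym2] at i2
    -- bounds on the division terms
    have e1 : p (y n) xstar * p (T (y n)) xstar / (1 + p (y n) xstar) ≤ p (T (y n)) xstar := by
      rw [div_le_iff₀ h1A]; nlinarith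
    have e2 : p (y n) (T (y n)) * p (y n) xstar / (1 + p (y n) xstar) ≤ p (y n) (T (y n)) := by
      rw [div_le_iff₀ h1A]; nlinarith
    have e3 : p (T (y n)) xstar * p (y n) xstar / (1 + p (y n) xstar) ≤ p (T (y n)) xstar := by
      rw [div_le_iff₀ h1A]; nlinarith
    have i1' : p (T (y n)) xstar ≤ l₁ * p (y n) xstar + l₃ * p (T (y n)) xstar
        + l₄ * p (y n) (T (y n)) := by
      have b3 := mul_le_mul_of_nonneg_left e1 h₃
      have b4 := mul_le_mul_of_nonneg_left e2 h₄
      simp only [mul_zero, zero_mul, zero_div, add_zero] at i1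
      linarith
    have i2' : p (T (y n)) xstar ≤ l₁ * p (y n) xstar + l₃ * p (T (y n)) xstar
        + l₅ * p (y n) (T (y n)) := by
      have b3 := mul_le_mul_of_nonneg_left e3 h₃
      have b5 := mul_le_mul_of_nonneg_left e2 h₅
      simp only [mul_zero, zero_mul, zero_div, add_zero] at i2
      linarith
    have tri : p (y n) (T (y n)) ≤ s * (p (y n) xstar + p (T (y n)) xstar) := by
      have := htri (y n) (T (y n)) xstar
      rw [hsym1] at this
      linarith [hpos xstar xstar]
    have iB : (1 - μ) * p (T (y n)) xstar ≤ ν * p (y n) xstar := by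
      have htr := mul_le_mul_of_nonneg_left tri (by linarith : (0:ℝ) ≤ l₄ + l₅)
      rw [hμ, hν]; nlinarith
    have hsB : s * p (T (y n)) xstar ≤ κ * p (y n) xstar := by
      rw [hκ, div_mul_eq_mul_div, le_div_iff₀ hd]
      nlinarith [mul_le_mul_of_nonneg_left iB hs0]
    have tri2 := htri (y (n + 1)) xstar (T (y n))
    have hsym3 : p (T (y n)) xstar = p xstar (T (y n)) := (hsym _ _).symm
    nlinarith [hpos (T (y n)) (T (y n)), tri2, hsB]
  have hc' : Filter.Tendsto (fun n => s * p (y (n + 1)) (T (y n))) Filter.atTop (nhds 0) := by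
    have := hy.const_mul s
    simpa using this
  exact aux_rec_tendsto hκ0 hκ1 (fun n => hpos _ _) key hc'
end

section
/- Let (X,p) be a partial b-metric space with coefficient s ≥ 1 and T: X → X a mapping with F(T) ≠ ∅ such that p(Tx, T²x) ≤ λ p(x, Tx) for all x ∈ X, where 0 ≤ λ < 1. Then F(T) = F(Tⁿ) for every n ∈ ℕ, n ≥ 1 (T has the P property). -/
theorem stmt_16 {X : Type*} (p : X → X → ℝ) (s : ℝ)
    (hp : IsPartialBMetric p s) (T : X → X)
    (hne : ∃ u : X, T u = u)
    (lam : ℝ) (hl0 : 0 ≤ lam) (hl1 : lam < 1)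
    (hT : ∀ x : X, p (T x) (T (T x)) ≤ lam * p x (T x)) :
    ∀ n : ℕ, 1 ≤ n → ∀ z : X, (T^[n] z = z ↔ T z = z) := by
  obtain ⟨hs, hpos, heq, hsmall, hsym, htri⟩ := hp
  intro n hn z
  constructor
  · intro hz
    -- key estimate
    have key : ∀ k : ℕ, p (T^[k] z) (T^[k+1] z) ≤ lam ^ k * p z (T z) := by
      intro k
      induction k with
      | zero => simp
      | succ k ih =>
        have h1 : p (T^[k+1] z) (T^[k+2] z) ≤ lam * p (T^[k] z) (T^[k+1] z) := by
          have := hT (T^[k] z)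
          simpa [Function.iterate_succ_apply'] using this
        calc p (T^[k+1] z) (T^[k+2] z) ≤ lam * p (T^[k] z) (T^[k+1] z) := h1
          _ ≤ lam * (lam ^ k * p z (T z)) := by
              exact mul_le_mul_of_nonneg_left ih hl0
          _ = lam ^ (k+1) * p z (T z) := by ring
    have hkey := key n
    have h0 : T^[n+1] z = T z := by
      rw [Function.iterate_succ_apply', hz]
    rw [hz, h0] at hkey
    have hlt : lam ^ n < 1 := by
      calc lam ^ n ≤ lam ^ 1 := pow_le_pow_of_le_one hl0 hl1.le hn
        _ = lam := pow_one lam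
        _ < 1 := hl1
    have hp0 : p z (T z) = 0 := by
      nlinarith [hpos z (T z)]
    -- p z (T z) = 0 implies z = T z
    have h1 : p z z = 0 :=
      le_antisymm (hp0 ▸ hsmall z (T z)) (hpos z z)
    have h2 : p (T z) (T z) = 0 := by
      have := hsmall (T z) z
      rw [hsym (T z) z] at this
      exact le_antisymm (hp0 ▸ this) (hpos (T z) (T z))
    exact ((heq z (T z)).mpr ⟨by rw [h1, hp0], by rw [hp0, h2]⟩).symm
  · intro hz
    exact Function.iterate_fixed hz n
end
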